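/- Let ω be the canonical symplectic form on T*Q, γ a one-form on Q, λ = γ ∘ π_Q. Then for all v, w ∈ T_α(T*Q): ω(Tλ·v, w) = ω(v, w - Tλ·w) - dγ(Tπ_Q v, Tπ_Q w). -/

import Mathlib

/-- Lemma 3.3(ii): for the canonical symplectic form ω on T*Q (flat model
T*Q = E × E*), a one-form γ and λ = γ ∘ π_Q, for all tangent vectors v, w:
ω(Tλ·v, w) = ω(v, w - Tλ·w) - dγ(Tπ_Q v, Tπ_Q w). -/
theorem stmt7 (E : Type*) [NormedAddCommGroup E] [NormedSpace ℝ E]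
    (γ : E → (E →L[ℝ] ℝ)) (hγ : Differentiable ℝ γ)
    (ω : (E × (E →L[ℝ] ℝ)) → (E × (E →L[ℝ] ℝ)) → ℝ)
    (hω : ∀ u v, ω u v = v.2 u.1 - u.2 v.1) :
    ∀ (α : E × (E →L[ℝ] ℝ)) (v w : E × (E →L[ℝ] ℝ)),
      ω ((fderiv ℝ (fun z : E × (E →L[ℝ] ℝ) => (z.1, γ z.1)) α) v) w
        = ω v (w - (fderiv ℝ (fun z : E × (E →L[ℝ] ℝ) => (z.1, γ z.1)) α) w)
          - ((fderiv ℝ γ α.1 v.1) w.1 - (fderiv ℝ γ α.1 w.1) v.1) := by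
  intro α v w
  have key : fderiv ℝ (fun z : E × (E →L[ℝ] ℝ) => (z.1, γ z.1)) α
      = (ContinuousLinearMap.fst ℝ E (E →L[ℝ] ℝ)).prod
        ((fderiv ℝ γ α.1).comp (ContinuousLinearMap.fst ℝ E (E →L[ℝ] ℝ))) := by
    refine HasFDerivAt.fderiv ?_
    exact HasFDerivAt.prodMk (hasFDerivAt_fst) (((hγ α.1).hasFDerivAt.comp α hasFDerivAt_fst))
  rw [key]
  simp [hω, ContinuousLinearMap.prod_apply]
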